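/- Let α ∈ ℝ, β ∈ [0,1), and γ, δ ∈ ℝ with δ ≥ |γ|, let X be any real number, and set c = γX + δ|X| (so c ≥ 0). Then the inverted EGARCH(1,1) map φ is Lipschitz on [α/(1−β), ∞) with constant max{β, (c/2)·exp(−α/(2(1−β))) − β}: for all x, y ≥ α/(1−β), |φ(x) − φ(y)| ≤ max{β, (c/2)·exp(−α/(2(1−β))) − β} · |x − y|. -/

import Mathlib

/-- The inverted EGARCH(1,1) map `φ(x) = α + βx + c·exp(-x/2)` with
`c = γX + δ|X| ≥ 0` is Lipschitz on `[α/(1-β), ∞)` with constant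
`max{β, (c/2)·exp(-α/(2(1-β))) - β}`. -/
theorem egarch_inverted_map_lipschitz
    (α β γ δ X : ℝ) (hβ0 : 0 ≤ β) (hβ1 : β < 1) (hδγ : δ ≥ |γ|)
    (x y : ℝ) (hx : α / (1 - β) ≤ x) (hy : α / (1 - β) ≤ y) :
    |(α + β * x + (γ * X + δ * |X|) * Real.exp (-x / 2)) -
        (α + β * y + (γ * X + δ * |X|) * Real.exp (-y / 2))| ≤
      max β ((γ * X + δ * |X|) / 2 * Real.exp (-α / (2 * (1 - β))) - β) * |x - y| := by
  set c := γ * X + δ * |X| with hc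
  have hc0 : 0 ≤ c := by
    have h1 : -(δ * |X|) ≤ γ * X := by
      have := abs_mul γ X
      have h2 : |γ * X| ≤ δ * |X| := by
        rw [abs_mul]
        exact mul_le_mul_of_nonneg_right hδγ (abs_nonneg X)
      linarith [neg_abs_le (γ * X)]
    linarith
  set m := α / (1 - β) with hm
  have h1β : 0 < 1 - β := by linarith
  have hmexp : Real.exp (-α / (2 * (1 - β))) = Real.exp (-m / 2) := by
    congr 1
    rw [hm, mul_comm, ← div_div, neg_div]
  set L := max β (c / 2 * Real.exp (-α / (2 * (1 - β))) - β) with hL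
  set f : ℝ → ℝ := fun t => α + β * t + c * Real.exp (-t / 2) with hf
  set f' : ℝ → ℝ := fun t => β - c / 2 * Real.exp (-t / 2) with hf'
  have hderiv : ∀ t ∈ Set.Ici m, HasDerivWithinAt f (f' t) (Set.Ici m) t := by
    intro t ht
    have h1 : HasDerivAt (fun t : ℝ => -t / 2) (-(1 : ℝ) / 2) t := by
      simpa using ((hasDerivAt_id t).neg.div_const 2)
    have h2 : HasDerivAt (fun t : ℝ => Real.exp (-t / 2)) (Real.exp (-t / 2) * (-1 / 2)) t :=
      h1.exp
    have h3 : HasDerivAt f (f' t) t := by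
      have := ((hasDerivAt_const t α).add ((hasDerivAt_id t).const_mul β)).add
        (h2.const_mul c)
      convert this using 1
      · rfl
      · rfl
      · rfl
      simp [hf']
      ring
    exact h3.hasDerivWithinAt
  have hbound : ∀ t ∈ Set.Ici m, ‖f' t‖ ≤ L := by
    intro t ht
    have hexp : Real.exp (-t / 2) ≤ Real.exp (-m / 2) := by
      apply Real.exp_le_exp.mpr
      simp only [Set.mem_Ici] at ht
      linarith
    have hv0 : 0 ≤ c / 2 * Real.exp (-t / 2) :=
      mul_nonneg (by linarith) (Real.exp_pos _).le
    have hv1 : c / 2 * Real.exp (-t / 2) ≤ c / 2 * Real.exp (-m / 2) :=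
      mul_le_mul_of_nonneg_left hexp (by linarith)
    rw [Real.norm_eq_abs, abs_le]
    constructor
    · have : c / 2 * Real.exp (-α / (2 * (1 - β))) - β ≤ L := le_max_right _ _
      rw [hmexp] at this
      simp only [hf']
      linarith
    · have : β ≤ L := le_max_left _ _
      simp only [hf']
      linarith
  have key := (convex_Ici m).norm_image_sub_le_of_norm_hasDerivWithin_le hderiv hbound hy hx
  rw [Real.norm_eq_abs, Real.norm_eq_abs] at key
  simpa [hf, abs_sub_comm] using key
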